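/- If ρ^B(0) = ρ^B(1) exactly (perfect concealment) for the reduced states of pure bipartite states |Ψ(0)⟩, |Ψ(1)⟩ ∈ H_A ⊗ H_B, then there exists a unitary U_A on H_A with (U_A ⊗ I)|Ψ(1)⟩ = |Ψ(0)⟩, and hence F(ρ^B_final(0), ρ'^B_final(0)) = 1 for all unitary continuations: Alice's cheating succeeds with certainty. -/

import Mathlib

open scoped BigOperators ComplexOrder

noncomputable section

namespace QBC

/-- Total matrix square root (junk value `0` off the PSD cone). -/
def msqrt {n : Type*} [Fintype n] [DecidableEq n] (A : Matrix n n ℂ) : Matrix n n ℂ :=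
  open scoped Classical in
  if h : A.PosSemidef then
    h.1.eigenvectorUnitary.1 * Matrix.diagonal ((↑) ∘ (√·) ∘ h.1.eigenvalues) *
      (star h.1.eigenvectorUnitary : Matrix n n ℂ)
  else 0

/-- Quantum fidelity `F(ρ,σ) = tr √(√ρ σ √ρ)`. -/
def fidelity {n : Type*} [Fintype n] [DecidableEq n] (ρ σ : Matrix n n ℂ) : ℝ :=
  ((msqrt (msqrt ρ * σ * msqrt ρ)).trace).re

/-- Density operator: positive semidefinite with unit trace. -/
def IsDensity {n : Type*} [Fintype n] [DecidableEq n] (ρ : Matrix n n ℂ) : Prop :=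
  ρ.PosSemidef ∧ ρ.trace = 1

/-- Inner product `⟨ψ|φ⟩`. -/
def ip {α : Type*} [Fintype α] (ψ φ : α → ℂ) : ℂ := ∑ x, star (ψ x) * φ x

/-- Rank-one projection `|ψ⟩⟨ψ|`. -/
def proj {α : Type*} [Fintype α] (ψ : α → ℂ) : Matrix α α ℂ :=
  Matrix.of fun x y => ψ x * star (ψ y)

/-- Partial trace over the first tensor factor. -/
def ptraceA {A B : Type*} [Fintype A] (M : Matrix (A × B) (A × B) ℂ) : Matrix B B ℂ :=
  Matrix.of fun i j => ∑ a, M (a, i) (a, j)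

/-- `(U ⊗ I_B)` acting on a bipartite vector. -/
def applyA {A B : Type*} [Fintype A] (U : Matrix A A ℂ) (ψ : A × B → ℂ) : A × B → ℂ :=
  fun x => ∑ a', U x.1 a' * ψ (a', x.2)

/-! ### Auxiliary lemmas -/

section Aux

open scoped MatrixOrder in
lemma msqrt_of_psd {n : Type*} [Fintype n] [DecidableEq n] {ρ : Matrix n n ℂ}
    (h : ρ.PosSemidef) : msqrt ρ = CFC.sqrt ρ := by
  rw [msqrt, dif_pos h, CFC.sqrt_eq_cfc, cfc_nnreal_eq_real _ ρ h.nonneg, h.1.cfc_eq]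
  simp only [Matrix.IsHermitian.cfc, Unitary.conjStarAlgAut_apply]
  congr 3
  funext i
  simp [Real.coe_toNNReal', max_eq_left (h.eigenvalues_nonneg i)]

open scoped MatrixOrder in
lemma fidelity_self {n : Type*} [Fintype n] [DecidableEq n] {ρ : Matrix n n ℂ}
    (h : ρ.PosSemidef) (ht : ρ.trace = 1) : fidelity ρ ρ = 1 := by
  have h2 : CFC.sqrt ρ * ρ * CFC.sqrt ρ = ρ ^ 2 := by
    obtain ⟨s, hs⟩ : ∃ s, s * s = ρ ∧ s = CFC.sqrt ρ :=
      ⟨CFC.sqrt ρ, CFC.sqrt_mul_sqrt_self ρ h.nonneg, rfl⟩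
    rw [← hs.2, ← hs.1, pow_two]
    simp only [mul_assoc]
  rw [fidelity, msqrt_of_psd h, h2, msqrt_of_psd (h.pow 2), CFC.sqrt_sq ρ h.nonneg, ht]
  simp

/-- `ip` of two `mulVec`s, expressed through the Gram matrix `Mᴴ * M`. -/
lemma ip_mulVec {n m : Type*} [Fintype n] [Fintype m] (M : Matrix n m ℂ) (x y : m → ℂ) :
    ip (M.mulVec x) (M.mulVec y)
      = ∑ i, ∑ j, star (x i) * y j * ((Matrix.conjTranspose M * M) i j) := by
  calc ip (M.mulVec x) (M.mulVec y)
      = ∑ a, ∑ i, ∑ j, (star (M a i) * star (x i)) * (M a j * y j) := by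
        refine Finset.sum_congr rfl fun a _ => ?_
        rw [show M.mulVec x a = ∑ i, M a i * x i from rfl,
          show M.mulVec y a = ∑ j, M a j * y j from rfl, star_sum, Finset.sum_mul_sum]
        simp [star_mul']
    _ = ∑ i, ∑ a, ∑ j, (star (M a i) * star (x i)) * (M a j * y j) := Finset.sum_comm
    _ = ∑ i, ∑ j, ∑ a, (star (M a i) * star (x i)) * (M a j * y j) :=
        Finset.sum_congr rfl fun i _ => Finset.sum_comm
    _ = ∑ i, ∑ j, star (x i) * y j * ((Matrix.conjTranspose M * M) i j) := by
        refine Finset.sum_congr rfl fun i _ => Finset.sum_congr rfl fun j _ => ?_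
        rw [Matrix.mul_apply, Finset.mul_sum]
        refine Finset.sum_congr rfl fun a _ => ?_
        rw [Matrix.conjTranspose_apply]
        ring

variable {A B : Type*} [Fintype A] [DecidableEq A] [Fintype B] [DecidableEq B]

lemma ptraceA_proj_apply (ψ : A × B → ℂ) (i j : B) :
    ptraceA (proj ψ) i j = ∑ a, ψ (a, i) * star (ψ (a, j)) := rfl

/-- The reduced state is the Gram matrix of the conjugated "columns". -/
lemma ptraceA_proj_eq_gram (ψ : A × B → ℂ) :
    ptraceA (proj ψ) = Matrix.conjTranspose (Matrix.of fun (a : A) (j : B) => star (ψ (a, j))) *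
      (Matrix.of fun (a : A) (j : B) => star (ψ (a, j))) := by
  ext i j
  rw [ptraceA_proj_apply, Matrix.mul_apply]
  refine Finset.sum_congr rfl fun a _ => ?_
  simp [Matrix.conjTranspose_apply]

lemma ptraceA_proj_posSemidef (ψ : A × B → ℂ) : (ptraceA (proj ψ)).PosSemidef := by
  rw [ptraceA_proj_eq_gram]
  exact Matrix.posSemidef_conjTranspose_mul_self _

lemma ptraceA_proj_trace (ψ : A × B → ℂ) : (ptraceA (proj ψ)).trace = ip ψ ψ := by
  rw [Matrix.trace, ip, Fintype.sum_prod_type]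
  rw [Finset.sum_comm]
  refine Finset.sum_congr rfl fun j _ => ?_
  refine Finset.sum_congr rfl fun a _ => ?_
  exact mul_comm _ _

lemma ip_mulVec_unitary {n : Type*} [Fintype n] [DecidableEq n] {V : Matrix n n ℂ}
    (hV : V ∈ Matrix.unitaryGroup n ℂ) (φ : n → ℂ) :
    ip (V.mulVec φ) (V.mulVec φ) = ip φ φ := by
  have h1 : Matrix.conjTranspose V * V = 1 := Matrix.mem_unitaryGroup_iff'.mp hV
  rw [ip_mulVec, h1, ip]
  simp [Matrix.one_apply]

end Aux

/-- perfect concealment implies Alice can cheat with certainty,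
and her cheating survives any unitary continuation of the opening phase. -/
theorem ideal_no_go
    {A B : Type*} [Fintype A] [DecidableEq A] [Fintype B] [DecidableEq B]
    (Ψ : Bool → A × B → ℂ) (hunit : ∀ b, ip (Ψ b) (Ψ b) = 1)
    (hconc : ptraceA (proj (Ψ false)) = ptraceA (proj (Ψ true))) :
    ∃ U ∈ Matrix.unitaryGroup A ℂ,
      applyA U (Ψ true) = Ψ false ∧
      ∀ V ∈ Matrix.unitaryGroup (A × B) ℂ,
        fidelity (ptraceA (proj (V.mulVec (Ψ false))))
                 (ptraceA (proj (V.mulVec (applyA U (Ψ true))))) = 1 := by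
  classical
  -- the "column matrices"
  set M : Bool → Matrix A B ℂ := fun b => Matrix.of fun a j => Ψ b (a, j) with hM
  -- the corresponding linear maps into Euclidean space
  let T : Bool → ((B → ℂ) →ₗ[ℂ] EuclideanSpace ℂ A) := fun b =>
    (WithLp.linearEquiv 2 ℂ (A → ℂ)).symm.toLinearMap ∘ₗ (M b).mulVecLin
  have hT : ∀ b (x : B → ℂ), (T b x : A → ℂ) = (M b).mulVec x := fun b x => rfl
  -- equal Gram matrices
  have hgram : Matrix.conjTranspose (M false) * (M false) = Matrix.conjTranspose (M true) * (M true) := by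
    ext i j
    have h := congrArg (fun P : Matrix B B ℂ => star (P i j)) hconc
    simp only [ptraceA_proj_apply, star_sum, star_mul', star_star] at h
    rw [Matrix.mul_apply, Matrix.mul_apply]
    simpa [Matrix.conjTranspose_apply, hM, mul_comm] using h
  -- inner products, expressed as sums
  have hexp : ∀ u w : EuclideanSpace ℂ A, (inner ℂ u w : ℂ) = ∑ a, star (u a) * w a := by
    intro u w
    rw [PiLp.inner_apply]
    simp only [RCLike.inner_apply']
    rfl
  -- inner products agree
  have hinner : ∀ x y : B → ℂ,
      (inner ℂ (T false x) (T false y) : ℂ) = inner ℂ (T true x) (T true y) := by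
    intro x y
    have e : ∀ b, (inner ℂ (T b x) (T b y) : ℂ) = ip ((M b).mulVec x) ((M b).mulVec y) := by
      intro b
      rw [hexp]
      rfl
    rw [e, e, ip_mulVec, ip_mulVec, hgram]
  -- norms agree
  have hnorm : ∀ x : B → ℂ, ‖T false x‖ = ‖T true x‖ := by
    intro x
    have h := hinner x x
    rw [inner_self_eq_norm_sq_to_K, inner_self_eq_norm_sq_to_K] at h
    have h2 : ‖T false x‖ ^ 2 = ‖T true x‖ ^ 2 := by exact_mod_cast h
    exact (pow_left_inj₀ (norm_nonneg _) (norm_nonneg _) two_ne_zero).mp h2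
  -- kernel inclusion
  have hker : LinearMap.ker (T true) ≤ LinearMap.ker (T false) := by
    intro x hx
    rw [LinearMap.mem_ker] at hx ⊢
    have h := hinner x x
    rw [hx, inner_zero_left] at h
    exact inner_self_eq_zero.mp h
  -- the partial isometry on the range of T true
  let f0 : ((B → ℂ) ⧸ LinearMap.ker (T true)) →ₗ[ℂ] EuclideanSpace ℂ A :=
    (LinearMap.ker (T true)).liftQ (T false) hker
  let f : (LinearMap.range (T true) : Submodule ℂ (EuclideanSpace ℂ A)) →ₗ[ℂ]
      EuclideanSpace ℂ A :=
    f0 ∘ₗ ((T true).quotKerEquivRange.symm : _ →ₗ[ℂ] _)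
  have hf : ∀ (x : B → ℂ) (h : T true x ∈ LinearMap.range (T true)),
      f ⟨T true x, h⟩ = T false x := by
    intro x h
    show f0 ((T true).quotKerEquivRange.symm ⟨T true x, h⟩) = T false x
    rw [LinearMap.quotKerEquivRange_symm_apply_image]
    rfl
  have hfnorm : ∀ s : (LinearMap.range (T true) : Submodule ℂ (EuclideanSpace ℂ A)),
      ‖f s‖ = ‖s‖ := by
    rintro ⟨s, hs⟩
    obtain ⟨x, rfl⟩ := hs
    refine (congrArg norm (hf x _)).trans ?_
    exact (hnorm x).trans rfl
  let L : (LinearMap.range (T true) : Submodule ℂ (EuclideanSpace ℂ A)) →ₗᵢ[ℂ]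
      EuclideanSpace ℂ A := ⟨f, hfnorm⟩
  let g := L.extend
  have hg : ∀ x : B → ℂ, g (T true x) = T false x := by
    intro x
    have h1 := L.extend_apply ⟨T true x, LinearMap.mem_range_self _ x⟩
    have h2 : L ⟨T true x, LinearMap.mem_range_self _ x⟩ = T false x := hf x _
    exact h1.trans h2
  -- the unitary matrix
  let U : Matrix A A ℂ := Matrix.of fun a a' => g (EuclideanSpace.single a' (1 : ℂ)) a
  have hUmul : ∀ v : A → ℂ, U.mulVec v = (g (WithLp.toLp 2 v) : A → ℂ) := by
    intro v
    have hv : (WithLp.toLp 2 v : EuclideanSpace ℂ A) = ∑ a', v a' • EuclideanSpace.single a' (1 : ℂ) := by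
      ext a
      have h1 : (∑ a', v a' • EuclideanSpace.single a' (1 : ℂ)) a
          = ∑ a', (v a' • EuclideanSpace.single a' (1 : ℂ)) a := by
        rw [WithLp.ofLp_sum]; exact Finset.sum_apply a Finset.univ _
      rw [h1]
      simp [EuclideanSpace.single_apply]
    have h1 : (g (WithLp.toLp 2 v) : EuclideanSpace ℂ A) = ∑ a', v a' • g (EuclideanSpace.single a' (1:ℂ)) := by
      conv_lhs => rw [hv]
      rw [map_sum]
      exact Finset.sum_congr rfl fun a' _ => g.map_smul _ _
    rw [h1]
    funext a
    rw [show U.mulVec v a = ∑ a', U a a' * v a' from rfl]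
    rw [show (∑ a', v a' • g (EuclideanSpace.single a' (1:ℂ))) a
        = ∑ a', (v a' • g (EuclideanSpace.single a' (1:ℂ))) a by
          rw [WithLp.ofLp_sum]; exact Finset.sum_apply a Finset.univ _]
    refine Finset.sum_congr rfl fun a' _ => ?_
    show U a a' * v a' = v a' * g (EuclideanSpace.single a' (1:ℂ)) a
    rw [mul_comm]
    rfl
  have hUuni : U ∈ Matrix.unitaryGroup A ℂ := by
    rw [Matrix.mem_unitaryGroup_iff']
    ext i j
    have h := g.inner_map_map (EuclideanSpace.single i (1:ℂ)) (EuclideanSpace.single j (1:ℂ))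
    have hR : ∑ a, star ((EuclideanSpace.single i (1:ℂ)) a) * (EuclideanSpace.single j (1:ℂ)) a
        = if i = j then (1:ℂ) else 0 := by
      simp [EuclideanSpace.single_apply, eq_comm]
    rw [hexp, hexp, hR] at h
    rw [Matrix.mul_apply, Matrix.one_apply, ← h]
    refine Finset.sum_congr rfl fun a _ => ?_
    rw [Matrix.star_apply]
    rfl
  have happly : applyA U (Ψ true) = Ψ false := by
    funext x
    obtain ⟨a, b⟩ := x
    have hcol : ∀ c : Bool, (M c).mulVec (Pi.single b 1) = fun a' => Ψ c (a', b) := by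
      intro c
      funext a'
      rw [show (M c).mulVec (Pi.single b 1) a' = ∑ j, Ψ c (a', j) * (Pi.single b (1:ℂ) : B → ℂ) j from rfl]
      simp [Pi.single_apply, mul_ite]
    have h1 : applyA U (Ψ true) (a, b) = U.mulVec ((M true).mulVec (Pi.single b 1)) a := by
      rw [hcol]
      rfl
    rw [h1, hUmul]
    have h2 : (WithLp.toLp 2 ((M true).mulVec (Pi.single b 1)) : EuclideanSpace ℂ A) = T true (Pi.single b 1) := rfl
    rw [h2, hg]
    have h3 : (T false (Pi.single b 1) : A → ℂ) = (M false).mulVec (Pi.single b 1) := rfl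
    show (T false (Pi.single b 1) : A → ℂ) a = Ψ false (a, b)
    rw [h3, hcol]
  refine ⟨U, hUuni, happly, ?_⟩
  intro V hV
  rw [happly]
  apply fidelity_self (ptraceA_proj_posSemidef _)
  rw [ptraceA_proj_trace, ip_mulVec_unitary hV, hunit]

end QBC
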